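/- Let ℜ ⊆ F(𝒜) and let P(ℜ) ⊆ S be the ideal generated by the elements of ℜ (viewed as linear polynomials). Then for every f ∈ S: f ∈ P(ℜ) if and only if ι(f) ∈ √(J(ℜ)) : x_[n]. -/

import Mathlib

open MvPolynomial

noncomputable section

variable {K : Type*} [Field K] {n : ℕ}

/-- `Λ(f)`: the least common multiple of the monomials of `f` (so `Λ(0) = 1`). -/
def lamP (f : MvPolynomial (Fin n) K) : MvPolynomial (Fin n) K :=
  ∏ i, X i ^ (f.support.sup fun m => m i)

/-- `ι(f)`: the unique polynomial with `f(x₁⁻¹,…,xₙ⁻¹) = ι(f)/Λ(f)` in `K(x₁,…,xₙ)`. -/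
def iotaP (f : MvPolynomial (Fin n) K) : MvPolynomial (Fin n) K :=
  ∑ m ∈ f.support, C (f.coeff m) * ∏ i, X i ^ ((f.support.sup fun m' => m' i) - m i)

/-- The evaluation `f(x₁⁻¹,…,xₙ⁻¹)` of `f` at `(x₁⁻¹,…,xₙ⁻¹)`, an element of the fraction
field `K(x₁,…,xₙ)`. -/
def invEval (f : MvPolynomial (Fin n) K) : FractionRing (MvPolynomial (Fin n) K) :=
  eval₂ ((algebraMap (MvPolynomial (Fin n) K) (FractionRing (MvPolynomial (Fin n) K))).comp C)
    (fun i => (algebraMap (MvPolynomial (Fin n) K) (FractionRing (MvPolynomial (Fin n) K)) (X i))⁻¹) f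

variable {K : Type*} [Field K] {n : ℕ}

/-- The linear form `∑ᵢ aᵢ xᵢ ∈ S₁` associated to a coefficient vector `a : Fin n → K`. -/
def toLin (a : Fin n → K) : MvPolynomial (Fin n) K := ∑ i, C (a i) * X i

/-- `a` is a relation of the central arrangement whose hyperplanes are the kernels of the
linear forms `α i`. -/
def IsRel {V : Type*} [AddCommGroup V] [Module K V]
    (α : Fin n → Module.Dual K V) (a : Fin n → K) : Prop :=
  ∑ i, a i • α i = 0

def revP (d : Fin n →₀ ℕ) (f : MvPolynomial (Fin n) K) : MvPolynomial (Fin n) K :=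
  ∑ m ∈ f.support, monomial (d - m) (coeff m f)

lemma revP_eq_sum_superset (d : Fin n →₀ ℕ) (f : MvPolynomial (Fin n) K)
    (s : Finset (Fin n →₀ ℕ)) (hs : f.support ⊆ s) :
    revP d f = ∑ m ∈ s, monomial (d - m) (coeff m f) := by
  refine Finset.sum_subset hs fun m _ hm => ?_
  rw [notMem_support_iff.mp hm, monomial_zero]

lemma revP_zero (d : Fin n →₀ ℕ) : revP d (0 : MvPolynomial (Fin n) K) = 0 := by
  simp [revP]

lemma revP_add (d : Fin n →₀ ℕ) (f g : MvPolynomial (Fin n) K) :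
    revP d (f + g) = revP d f + revP d g := by
  rw [revP_eq_sum_superset d (f+g) (f.support ∪ g.support)
      (MvPolynomial.support_add),
    revP_eq_sum_superset d f (f.support ∪ g.support) Finset.subset_union_left,
    revP_eq_sum_superset d g (f.support ∪ g.support) Finset.subset_union_right,
    ← Finset.sum_add_distrib]
  simp [coeff_add, map_add]

lemma revP_sum (d : Fin n →₀ ℕ) {ι : Type*} (s : Finset ι) (F : ι → MvPolynomial (Fin n) K) :
    revP d (∑ i ∈ s, F i) = ∑ i ∈ s, revP d (F i) := by
  classical
  induction s using Finset.induction with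
  | empty => simp [revP_zero]
  | insert _ _ h ih => simp [Finset.sum_insert h, revP_add, ih]

lemma revP_monomial (d m : Fin n →₀ ℕ) (c : K) :
    revP d (monomial m c) = monomial (d - m) c := by
  rw [revP_eq_sum_superset d _ {m} support_monomial_subset, Finset.sum_singleton,
    coeff_monomial, if_pos rfl]

lemma revP_shift {d e : Fin n →₀ ℕ} {f : MvPolynomial (Fin n) K}
    (hf : ∀ m ∈ f.support, m ≤ e) (hed : e ≤ d) :
    revP d f = monomial (d - e) 1 * revP e f := by
  unfold revP
  rw [Finset.mul_sum]
  refine Finset.sum_congr rfl fun m hm => ?_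
  rw [monomial_mul, one_mul]
  have : d - e + (e - m) = d - m := by
    ext i
    have h1 : m i ≤ e i := Finsupp.le_def.mp (hf m hm) i
    have h2 : e i ≤ d i := Finsupp.le_def.mp hed i
    simp only [Finsupp.tsub_apply, Finsupp.add_apply]
    omega
  rw [this]

lemma revP_monomial_mul {d e m : Fin n →₀ ℕ} (c : K) {g : MvPolynomial (Fin n) K}
    (hm : m ≤ d) (hg : ∀ m' ∈ g.support, m' ≤ e) :
    revP (d + e) (monomial m c * g) = monomial (d - m) c * revP e g := by
  have hexp : monomial m c * g = ∑ m' ∈ g.support, monomial (m + m') (c * coeff m' g) := by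
    conv_lhs => rw [g.as_sum]
    rw [Finset.mul_sum]
    exact Finset.sum_congr rfl fun m' _ => by rw [monomial_mul]
  rw [hexp, revP_sum]
  conv_rhs => rw [revP]
  rw [Finset.mul_sum]
  refine Finset.sum_congr rfl fun m' hm' => ?_
  rw [revP_monomial, monomial_mul]
  have : d + e - (m + m') = d - m + (e - m') := by
    ext i
    have h1 : m i ≤ d i := Finsupp.le_def.mp hm i
    have h2 : m' i ≤ e i := Finsupp.le_def.mp (hg m' hm') i
    simp only [Finsupp.tsub_apply, Finsupp.add_apply]
    omega
  rw [this]

lemma revP_mul {d e : Fin n →₀ ℕ} {f g : MvPolynomial (Fin n) K}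
    (hf : ∀ m ∈ f.support, m ≤ d) (hg : ∀ m' ∈ g.support, m' ≤ e) :
    revP (d + e) (f * g) = revP d f * revP e g := by
  have hexp : f * g = ∑ m ∈ f.support, monomial m (coeff m f) * g := by
    conv_lhs => rw [f.as_sum]
    rw [Finset.sum_mul]
  rw [hexp, revP_sum]
  conv_rhs => rw [revP]
  rw [Finset.sum_mul]
  exact Finset.sum_congr rfl fun m hm => revP_monomial_mul (coeff m f) (hf m hm) hg

lemma revP_revP {d : Fin n →₀ ℕ} {f : MvPolynomial (Fin n) K}
    (hf : ∀ m ∈ f.support, m ≤ d) :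
    revP d (revP d f) = f := by
  have hexp : revP d f = ∑ m ∈ f.support, monomial (d - m) (coeff m f) := rfl
  rw [hexp, revP_sum]
  conv_rhs => rw [f.as_sum]
  refine Finset.sum_congr rfl fun m hm => ?_
  rw [revP_monomial]
  have : d - (d - m) = m := by
    ext i
    have h1 : m i ≤ d i := Finsupp.le_def.mp (hf m hm) i
    simp only [Finsupp.tsub_apply]
    omega
  rw [this]

lemma support_revP_le {d : Fin n →₀ ℕ} (f : MvPolynomial (Fin n) K) :
    ∀ m' ∈ (revP d f).support, m' ≤ d := by
  intro m' hm'
  by_contra h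
  apply notMem_support_iff.mpr ?_ hm'
  unfold revP
  rw [coeff_sum]
  refine Finset.sum_eq_zero fun m _ => ?_
  rw [coeff_monomial, if_neg, ]
  rintro rfl
  exact h (tsub_le_self)

lemma support_pow_le {e : Fin n →₀ ℕ} {f : MvPolynomial (Fin n) K}
    (hf : ∀ m ∈ f.support, m ≤ e) (k : ℕ) :
    ∀ m ∈ (f ^ k).support, m ≤ k • e := by
  classical
  induction k with
  | zero =>
    intro m hm
    rw [pow_zero] at hm
    have hc := mem_support_iff.mp hm
    rw [coeff_one] at hc
    have : m = 0 := by
      by_contra h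
      exact hc (if_neg fun h' => h h'.symm)
    simp [this]
  | succ k ih =>
    intro m hm
    rw [pow_succ] at hm
    obtain ⟨a, ha, b, hb, rfl⟩ := Finset.mem_add.mp (MvPolynomial.support_mul _ _ hm)
    have := add_le_add (ih a ha) (hf b hb)
    rwa [succ_nsmul]

lemma revP_pow {e : Fin n →₀ ℕ} {f : MvPolynomial (Fin n) K}
    (hf : ∀ m ∈ f.support, m ≤ e) (k : ℕ) :
    revP (k • e) (f ^ k) = (revP e f) ^ k := by
  induction k with
  | zero => simp only [pow_zero, zero_smul]
            rw [show (1 : MvPolynomial (Fin n) K) = monomial 0 1 by simp, revP_monomial]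
            simp
  | succ k ih =>
    rw [pow_succ, succ_nsmul, revP_mul (support_pow_le hf k) hf, ih, pow_succ]

def degF (f : MvPolynomial (Fin n) K) : Fin n →₀ ℕ :=
  Finsupp.equivFunOnFinite.symm (fun i => f.support.sup fun m => m i)

lemma le_degF {f : MvPolynomial (Fin n) K} : ∀ m ∈ f.support, m ≤ degF f := by
  intro m hm
  refine Finsupp.le_def.mpr fun i => ?_
  simpa [degF, Finsupp.coe_equivFunOnFinite_symm] using
    Finset.le_sup (f := fun m' => m' i) hm

lemma prod_X_pow_eq (k : Fin n → ℕ) (c : K) :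
    C c * ∏ i, X i ^ k i = monomial (Finsupp.equivFunOnFinite.symm k) c := by
  rw [monomial_eq]
  congr 1
  have h1 : (Finsupp.equivFunOnFinite.symm k).prod (fun i e => (X i : MvPolynomial (Fin n) K) ^ e)
      = ∏ i, (X i : MvPolynomial (Fin n) K) ^ (Finsupp.equivFunOnFinite.symm k) i := by
    rw [Finsupp.prod]
    exact Finset.prod_subset (Finset.subset_univ _) fun i _ hi => by
      rw [Finsupp.notMem_support_iff.mp hi, pow_zero]
  rw [h1]
  exact Finset.prod_congr rfl fun i _ => by
    rw [Finsupp.coe_equivFunOnFinite_symm]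

lemma iotaP_eq_revP (f : MvPolynomial (Fin n) K) : iotaP f = revP (degF f) f := by
  unfold iotaP revP
  refine Finset.sum_congr rfl fun m hm => ?_
  rw [prod_X_pow_eq]
  have : Finsupp.equivFunOnFinite.symm (fun i => (f.support.sup fun m' => m' i) - m i)
      = degF f - m := by
    ext i
    simp [degF, Finsupp.tsub_apply, Finsupp.coe_equivFunOnFinite_symm]
  rw [this]

lemma toLin_single (i : Fin n) : toLin (Pi.single i (1:K)) = X i := by
  unfold toLin
  rw [Finset.sum_eq_single i]
  · simp
  · intro j _ hj
    simp [Pi.single_apply, hj]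
  · intro h; exact absurd (Finset.mem_univ i) h

lemma toLin_sum {ι : Type*} (s : Finset ι) (v : ι → Fin n → K) :
    toLin (∑ i ∈ s, v i) = ∑ i ∈ s, toLin (v i) := by
  unfold toLin
  rw [Finset.sum_comm]
  refine Finset.sum_congr rfl fun j _ => ?_
  rw [← Finset.sum_mul]
  congr 1
  rw [← map_sum]
  congr 1
  simp

lemma toLin_smul (c : K) (v : Fin n → K) : toLin (c • v) = C c * toLin v := by
  unfold toLin
  rw [Finset.mul_sum]
  refine Finset.sum_congr rfl fun i _ => ?_
  rw [← mul_assoc, ← map_mul]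
  rfl

lemma toLin_sub (a b : Fin n → K) : toLin (a - b) = toLin a - toLin b := by
  unfold toLin
  rw [← Finset.sum_sub_distrib]
  refine Finset.sum_congr rfl fun i _ => ?_
  rw [← sub_mul, ← map_sub]
  rfl

lemma coeff_toLin (a : Fin n → K) (i : Fin n) :
    coeff (Finsupp.single i 1) (toLin a) = a i := by
  unfold toLin
  rw [coeff_sum]
  rw [Finset.sum_eq_single i]
  · rw [show (C (a i) * X i : MvPolynomial (Fin n) K) = monomial (Finsupp.single i 1) (a i) by
      rw [X, C_mul_monomial, mul_one], coeff_monomial, if_pos rfl]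
  · intro j _ hj
    rw [show (C (a j) * X j : MvPolynomial (Fin n) K) = monomial (Finsupp.single j 1) (a j) by
      rw [X, C_mul_monomial, mul_one], coeff_monomial,
      if_neg (fun h => hj ((Finsupp.single_left_inj one_ne_zero).mp h))]
  · intro h; exact absurd (Finset.mem_univ i) h

lemma toLin_ne_zero {a : Fin n → K} (ha : a ≠ 0) : toLin a ≠ 0 := by
  intro h
  apply ha
  funext i
  have := coeff_toLin a i
  rw [h, coeff_zero] at this
  exact this.symm

lemma toLin_zero : toLin (0 : Fin n → K) = 0 := by unfold toLin; simp

lemma toLin_add (a b : Fin n → K) : toLin (a + b) = toLin a + toLin b := by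
  unfold toLin
  rw [← Finset.sum_add_distrib]
  refine Finset.sum_congr rfl fun i _ => ?_
  rw [← add_mul, ← map_add]
  rfl

lemma toLin_mem_span {R : Set (Fin n → K)} {w : Fin n → K}
    (hw : w ∈ Submodule.span K R) : toLin w ∈ Ideal.span (toLin '' R) := by
  refine Submodule.span_induction ?_ ?_ ?_ ?_ hw
  · intro x hx; exact Ideal.subset_span ⟨x, hx, rfl⟩
  · rw [toLin_zero]; exact zero_mem _
  · intro x y _ _ hx hy
    rw [toLin_add]
    exact add_mem hx hy
  · intro c x _ hx
    rw [toLin_smul]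
    exact Ideal.mul_mem_left _ _ hx

lemma fwd_aux (R : Set (Fin n → K)) {f : MvPolynomial (Fin n) K}
    (hf : f ∈ Ideal.span (toLin '' R)) :
    ∃ D : Fin n →₀ ℕ, ∀ d, D ≤ d →
      revP d f ∈ Ideal.span ((fun r => iotaP (toLin r)) '' R) := by
  refine Submodule.span_induction ?_ ?_ ?_ ?_ hf
  · rintro x ⟨r, hr, rfl⟩
    refine ⟨degF (toLin r), fun d hd => ?_⟩
    rw [revP_shift le_degF hd, ← iotaP_eq_revP]
    exact Ideal.mul_mem_left _ _ (Ideal.subset_span ⟨r, hr, rfl⟩)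
  · exact ⟨0, fun d _ => by rw [revP_zero]; exact zero_mem _⟩
  · rintro x y _ _ ⟨D₁, h₁⟩ ⟨D₂, h₂⟩
    refine ⟨D₁ + D₂, fun d hd => ?_⟩
    rw [revP_add]
    exact add_mem (h₁ d (le_trans le_self_add hd)) (h₂ d (le_trans le_add_self hd))
  · rintro g x _ ⟨D, hD⟩
    refine ⟨degF g + (D + degF x), fun d hd => ?_⟩
    have hed : D + degF x ≤ d := le_trans le_add_self hd
    have hgd : ∀ m ∈ g.support, m ≤ d - (D + degF x) := by
      intro m hm
      refine le_trans (le_degF m hm) (Finsupp.le_def.mpr fun i => ?_)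
      have h1 := Finsupp.le_def.mp hd i
      simp only [Finsupp.add_apply, Finsupp.tsub_apply] at h1 ⊢
      omega
    have hxd : ∀ m ∈ x.support, m ≤ D + degF x :=
      fun m hm => le_trans (le_degF m hm) le_add_self
    have hmul : revP d (g * x) = revP (d - (D + degF x)) g * revP (D + degF x) x := by
      conv_lhs => rw [← tsub_add_cancel_of_le hed]
      exact revP_mul hgd hxd
    rw [smul_eq_mul, hmul]
    exact Ideal.mul_mem_left _ _ (hD _ le_self_add)

lemma pid_prime_and_monomial {V : Type*} [AddCommGroup V] [Module K V]
    (α : Fin n → Module.Dual K V) (hne : ∀ i, α i ≠ 0)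
    (R : Set (Fin n → K)) (hR : ∀ r ∈ R, IsRel α r) :
    (Ideal.span (toLin '' R)).IsPrime ∧
      ∀ E : Fin n →₀ ℕ, monomial E (1:K) ∉ Ideal.span (toLin '' R) := by
  classical
  set W : Submodule K (Fin n → K) := Submodule.span K R with hW
  obtain ⟨W', hWc⟩ := Submodule.exists_isCompl W
  set π : (Fin n → K) →ₗ[K] (Fin n → K) :=
    W'.subtype.comp (W'.projectionOnto W hWc.symm) with hπ
  have hπW : ∀ w ∈ W, π w = 0 := by
    intro w hw
    have h := Submodule.linearProjOfIsCompl_apply_right hWc.symm (⟨w, hw⟩ : W)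
    simp only [hπ, LinearMap.comp_apply, Submodule.subtype_apply]
    rw [h]
    rfl
  have hsub : ∀ x, x - π x ∈ W := by
    intro x
    have h := Submodule.projection_add_projection_eq_self hWc.symm x
    have h3 : x - π x = ((W.projectionOnto W' hWc.symm.symm) x : Fin n → K) := by
      simp only [hπ, LinearMap.comp_apply, Submodule.subtype_apply]
      exact (eq_sub_of_add_eq' h).symm
    rw [h3]
    exact Submodule.coe_mem _
  set φ : MvPolynomial (Fin n) K →ₐ[K] MvPolynomial (Fin n) K :=
    MvPolynomial.aeval (fun i => toLin (π (Pi.single i 1))) with hφ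
  have hsum_single : ∀ a : Fin n → K, ∑ i, a i • (Pi.single i 1 : Fin n → K) = a := by
    intro a
    rw [← Finset.univ_sum_single a]
    refine Finset.sum_congr rfl fun i _ => ?_
    funext j
    by_cases h : j = i <;> simp [Pi.single_apply, h]
  have hφlin : ∀ a : Fin n → K, φ (toLin a) = toLin (π a) := by
    intro a
    have h1 : φ (toLin a) = ∑ i, C (a i) * toLin (π (Pi.single i 1)) := by
      conv_lhs => rw [toLin]
      rw [map_sum]
      refine Finset.sum_congr rfl fun i _ => ?_
      rw [map_mul, hφ, aeval_X, aeval_C, MvPolynomial.algebraMap_eq]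
    rw [h1]
    have h2 : ∀ i, C (a i) * toLin (π (Pi.single i 1)) = toLin (a i • π (Pi.single i 1)) :=
      fun i => (toLin_smul _ _).symm
    simp only [h2]
    rw [← toLin_sum]
    congr 1
    rw [show ∑ i, a i • π (Pi.single i 1) = π (∑ i, a i • (Pi.single i 1 : Fin n → K)) by
      rw [map_sum]; exact Finset.sum_congr rfl fun i _ => (map_smul π _ _).symm]
    rw [hsum_single]
  have hPk : Ideal.span (toLin '' R) = RingHom.ker φ := by
    apply le_antisymm
    · rw [Ideal.span_le]
      rintro x ⟨r, hr, rfl⟩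
      have : φ (toLin r) = 0 := by
        rw [hφlin, hπW r (Submodule.subset_span hr), toLin_zero]
      exact RingHom.mem_ker.mpr this
    · intro g hg
      have hhom : (Ideal.Quotient.mkₐ K (Ideal.span (toLin '' R))).comp φ
          = Ideal.Quotient.mkₐ K (Ideal.span (toLin '' R)) := by
        apply MvPolynomial.algHom_ext
        intro i
        simp only [AlgHom.comp_apply]
        rw [hφ, aeval_X]
        simp only [Ideal.Quotient.mkₐ_eq_mk]
        rw [Ideal.Quotient.eq]
        rw [← toLin_single i, ← toLin_sub]
        refine toLin_mem_span ?_
        have := W.neg_mem (hsub (Pi.single i 1))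
        rw [neg_sub] at this
        exact this
      have hkey := DFunLike.congr_fun hhom g
      simp only [AlgHom.comp_apply, Ideal.Quotient.mkₐ_eq_mk] at hkey
      rw [RingHom.mem_ker.mp hg, map_zero] at hkey
      exact Ideal.Quotient.eq_zero_iff_mem.mp hkey.symm
  have hprime : (Ideal.span (toLin '' R)).IsPrime := by
    rw [hPk]
    exact RingHom.ker_isPrime φ
  refine ⟨hprime, ?_⟩
  have hWrel : ∀ w ∈ W, ∑ j, w j • α j = 0 := by
    intro w hw
    refine Submodule.span_induction ?_ ?_ ?_ ?_ hw
    · exact fun x hx => hR x hx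
    · simp
    · intro x y _ _ hx hy
      rw [show ∑ j, (x + y) j • α j = (∑ j, x j • α j) + ∑ j, y j • α j by
        rw [← Finset.sum_add_distrib]
        exact Finset.sum_congr rfl fun j _ => by rw [Pi.add_apply, add_smul], hx, hy, add_zero]
    · intro c x _ hx
      rw [show ∑ j, (c • x) j • α j = c • ∑ j, x j • α j by
        rw [Finset.smul_sum]
        exact Finset.sum_congr rfl fun j _ => by
          rw [Pi.smul_apply, smul_eq_mul, ← smul_smul], hx, smul_zero]
  have hπsingle : ∀ i, π (Pi.single i (1:K)) ≠ 0 := by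
    intro i h0
    have hei : (Pi.single i (1:K)) ∈ W := by
      have := hsub (Pi.single i 1)
      rwa [h0, sub_zero] at this
    have := hWrel _ hei
    rw [Finset.sum_eq_single i] at this
    · simp only [Pi.single_eq_same, one_smul] at this
      exact hne i this
    · intro j _ hj
      simp [Pi.single_apply, hj]
    · intro h; exact absurd (Finset.mem_univ i) h
  intro E hmem
  rw [hPk] at hmem
  have hval := RingHom.mem_ker.mp hmem
  have h1 : monomial E (1:K) = C 1 * ∏ i, X i ^ E i := by
    rw [prod_X_pow_eq, Finsupp.equivFunOnFinite_symm_coe]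
  rw [h1, map_mul, map_prod] at hval
  have : ∀ i ∈ Finset.univ, φ ((X i : MvPolynomial (Fin n) K) ^ E i) ≠ 0 := by
    intro i _
    rw [map_pow, hφ, aeval_X]
    exact pow_ne_zero _ (toLin_ne_zero (hπsingle i))
  have hprod := Finset.prod_ne_zero_iff.mpr this
  simp only [map_one, one_mul] at hval
  exact hprod hval

/-- Lemma 3.2, first part: for `ℜ ⊆ F(𝒜)`, with `P(ℜ)` the ideal generated by the elements
of `ℜ` (as linear polynomials) and `J(ℜ) = (ι(r) : r ∈ ℜ)`, a polynomial `f ∈ S` lies in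
`P(ℜ)` if and only if `ι(f) ∈ √(J(ℜ)) : x_[n]`. -/
theorem mem_P_iff_iota_mem_radical_colon
    {V : Type*} [AddCommGroup V] [Module K V] [FiniteDimensional K V]
    (α : Fin n → Module.Dual K V) (hne : ∀ i, α i ≠ 0)
    (hdist : ∀ i j, i ≠ j → LinearMap.ker (α i) ≠ LinearMap.ker (α j))
    (R : Set (Fin n → K)) (hR : ∀ r ∈ R, IsRel α r)
    (f : MvPolynomial (Fin n) K) :
    f ∈ Ideal.span (toLin '' R) ↔
      iotaP f ∈ ((Ideal.span ((fun r => iotaP (toLin r)) '' R)).radical).colon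
        (Ideal.span {∏ i, (X i : MvPolynomial (Fin n) K)}) := by
  classical
  set J : Ideal (MvPolynomial (Fin n) K) :=
    Ideal.span ((fun r => iotaP (toLin r)) '' R) with hJ
  set onesF : Fin n →₀ ℕ := Finsupp.equivFunOnFinite.symm (fun _ => 1) with honesF
  have hones : ∀ i, onesF i = 1 := fun i =>
    congrFun (Finsupp.coe_equivFunOnFinite_symm _) i
  have hxall : (∏ i, (X i : MvPolynomial (Fin n) K)) = monomial onesF 1 := by
    rw [← prod_X_pow_eq (fun _ => 1) 1]
    simp
  have hsupp_iota : ∀ g : MvPolynomial (Fin n) K,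
      ∀ m ∈ (iotaP g).support, m ≤ degF g := by
    intro g
    rw [iotaP_eq_revP]
    exact support_revP_le g
  have hrev_iota : ∀ g : MvPolynomial (Fin n) K, revP (degF g) (iotaP g) = g := by
    intro g
    rw [iotaP_eq_revP]
    exact revP_revP le_degF
  rw [Ideal.mem_colon_span_singleton]
  constructor
  · intro hf
    obtain ⟨D, hD⟩ := fwd_aux R hf
    set d : Fin n →₀ ℕ := degF f + (D + onesF) with hd
    have h1 : revP d f ∈ J := hD d (le_trans le_self_add le_add_self)
    have h2 : revP d f = monomial (d - degF f) 1 * iotaP f := by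
      rw [revP_shift le_degF le_self_add, ← iotaP_eq_revP]
    set c : Fin n →₀ ℕ := d - degF f with hc
    have hmem : monomial c 1 * iotaP f ∈ J := h2 ▸ h1
    set N : ℕ := Finset.univ.sup (fun i => c i) with hN
    have hcle : c ≤ (N+1) • onesF := Finsupp.le_def.mpr fun i => by
      rw [Finsupp.smul_apply, hones, smul_eq_mul, mul_one]
      exact le_trans (Finset.le_sup (Finset.mem_univ i)) (Nat.le_succ N)
    rw [Ideal.mem_radical_iff]
    refine ⟨N+1, ?_⟩
    have hsplit : (monomial ((N+1) • onesF) (1:K) : MvPolynomial (Fin n) K)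
        = monomial ((N+1) • onesF - c) 1 * monomial c 1 := by
      rw [monomial_mul, one_mul, tsub_add_cancel_of_le hcle]
    have hexp : (iotaP f * ∏ i, (X i : MvPolynomial (Fin n) K)) ^ (N+1)
        = (monomial ((N+1) • onesF - c) 1 * iotaP f ^ N) * (monomial c 1 * iotaP f) := by
      rw [hxall, mul_pow, monomial_pow, one_pow, hsplit, pow_succ]
      ring
    rw [hexp]
    exact Ideal.mul_mem_left _ _ hmem
  · intro h
    obtain ⟨k0, hk0⟩ := Ideal.mem_radical_iff.mp h
    set k := k0 + 1 with hkdef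
    have hk : (iotaP f * ∏ i, (X i : MvPolynomial (Fin n) K)) ^ k ∈ J := by
      rw [pow_succ]
      exact Ideal.mul_mem_right _ _ hk0
    rw [hJ, Ideal.span] at hk
    obtain ⟨N, F, G, hFG⟩ := Submodule.mem_span_set'.mp hk
    choose r hrR hre using fun i : Fin N => (G i).2
    set A : Fin n →₀ ℕ := k • degF f with hA
    set B : Fin n →₀ ℕ :=
      k • onesF + ∑ i, (degF (F i) + degF (toLin (r i))) with hB
    set d : Fin n →₀ ℕ := A + B with hd
    -- LHS: revP d ((iotaP f * x)^k) = f^k * monomial E 1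
    have hu : (iotaP f * ∏ i, (X i : MvPolynomial (Fin n) K)) ^ k
        = iotaP f ^ k * monomial (k • onesF) 1 := by
      rw [hxall, mul_pow, monomial_pow, one_pow]
    have hsuppP : ∀ m ∈ (iotaP f ^ k).support, m ≤ A :=
      support_pow_le (hsupp_iota f) k
    have hsuppM : ∀ m ∈ (monomial (k • onesF) (1:K) : MvPolynomial (Fin n) K).support,
        m ≤ B := by
      intro m hm
      have := support_monomial_subset hm
      rw [Finset.mem_singleton] at this
      rw [this]
      exact le_self_add
    have hL : revP d ((iotaP f * ∏ i, (X i : MvPolynomial (Fin n) K)) ^ k)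
        = f ^ k * monomial (B - k • onesF) 1 := by
      rw [hu, hd, revP_mul hsuppP hsuppM, revP_monomial]
      congr 1
      rw [hA, revP_pow (hsupp_iota f) k, hrev_iota]
    -- RHS: revP d (∑ F i • G i) ∈ P
    have hR' : revP d ((iotaP f * ∏ i, (X i : MvPolynomial (Fin n) K)) ^ k)
        ∈ Ideal.span (toLin '' R) := by
      rw [← hFG, revP_sum]
      refine Ideal.sum_mem _ fun i _ => ?_
      have hgi : (G i : MvPolynomial (Fin n) K) = iotaP (toLin (r i)) := (hre i).symm
      have hSig : degF (F i) + degF (toLin (r i)) ≤ d := by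
        rw [hd, hB]
        refine le_trans (Finset.single_le_sum
          (f := fun j => degF (F j) + degF (toLin (r j)))
          (fun j _ => zero_le) (Finset.mem_univ i)) ?_
        exact le_trans le_add_self le_add_self
      set Λ : Fin n →₀ ℕ := degF (toLin (r i)) with hΛ
      have hΛd : Λ ≤ d := le_trans le_add_self hSig
      have hFd : ∀ m ∈ (F i).support, m ≤ d - Λ := by
        intro m hm
        refine le_trans (le_degF m hm) (Finsupp.le_def.mpr fun j => ?_)
        have h1 := Finsupp.le_def.mp hSig j
        simp only [Finsupp.add_apply, Finsupp.tsub_apply] at h1 ⊢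
        omega
      have hterm : revP d (F i • (G i : MvPolynomial (Fin n) K))
          = revP (d - Λ) (F i) * toLin (r i) := by
        rw [smul_eq_mul, hgi]
        have hstep : revP d (F i * iotaP (toLin (r i)))
            = revP (d - Λ) (F i) * revP Λ (iotaP (toLin (r i))) := by
          conv_lhs => rw [← tsub_add_cancel_of_le hΛd]
          exact revP_mul hFd (hsupp_iota _)
        rw [hstep, hΛ, hrev_iota]
      rw [hterm]
      exact Ideal.mul_mem_left _ _ (Ideal.subset_span ⟨r i, hrR i, rfl⟩)
    rw [hL] at hR'
    obtain ⟨hprime, hmono⟩ := pid_prime_and_monomial α hne R hR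
    rcases hprime.mem_or_mem hR' with hmem | hmem
    · exact hprime.mem_of_pow_mem k hmem
    · exact absurd hmem (hmono _)

end
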